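/- Let H be a κ-monoid for an infinite cardinal κ. Then the summation is commutative: for every family (x_i)_{i ∈ κ} in H and every bijection π : κ → κ, we have Σ_{i ∈ κ} x_i = Σ_{i ∈ κ} x_{π(i)}. -/

import Mathlib

open scoped Classical

universe u v w

/-- A κ-monoid (Definition 2.1 of the paper), with the index cardinal κ modelled
by an (infinite) index type `ι`.  `base` plays the role of the element `0 ∈ κ`. -/
structure KappaMonoid (ι : Type u) (H : Type v) where
  zero : H
  base : ι
  sum : (ι → H) → H
  /-- (A1) -/
  sum_single : ∀ x : ι → H, (∀ i, i ≠ base → x i = zero) → sum x = x base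
  /-- (A2) -/
  sum_flatten : ∀ (x : ι × ι → H) (π : ι × ι ≃ ι),
    sum (fun i => sum fun j => x (i, j)) = sum fun k => x (π.symm k)

namespace KappaMonoid

variable {ι : Type u} {H : Type v}

/-- The family with value `a` at `i`, `b` at `j`, and `0` elsewhere. -/
noncomputable def pairFam (M : KappaMonoid ι H) (i j : ι) (a b : H) : ι → H :=
  fun k => if k = i then a else if k = j then b else M.zero

/-- The induced binary addition `a + b` on a κ-monoid. -/
noncomputable def add [Nontrivial ι] (M : KappaMonoid ι H) (a b : H) : H :=
  M.sum (M.pairFam M.base (Classical.choose (exists_ne M.base)) a b)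

/-- `α·a`, where the cardinal `α` is realized as the cardinality of `s ⊆ ι`:
the κ-sum of the family equal to `a` on `s` and `0` elsewhere. -/
noncomputable def smulSet (M : KappaMonoid ι H) (s : Set ι) (a : H) : H :=
  M.sum fun i => if i ∈ s then a else M.zero

/-- The κ-sum of the subfamily of `x` supported on `s` (padding by `0`). -/
noncomputable def sumOn (M : KappaMonoid ι H) (s : Set ι) (x : ι → H) : H :=
  M.sum fun i => if i ∈ s then x i else M.zero

end KappaMonoid
theorem kappaMonoid_sum_comm {ι : Type u} {H : Type v} [Infinite ι]
    (M : KappaMonoid ι H) (x : ι → H) (π : ι ≃ ι) :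
    M.sum x = M.sum fun i => x (π i) := by
  obtain ⟨e⟩ : Nonempty (ι × ι ≃ ι) := by
    rw [← Cardinal.eq, Cardinal.mk_prod]
    simp [Cardinal.mul_eq_self (Cardinal.aleph0_le_mk ι)]
  set y : ι × ι → H := fun p => if p.2 = M.base then x p.1 else M.zero with hy
  have hinner : ∀ f : ι → H,
      (fun i => M.sum fun j => if j = M.base then f i else M.zero) = f := by
    intro f; funext i
    have := M.sum_single (fun j => if j = M.base then f i else M.zero)
      (fun j hj => if_neg hj)
    simpa using this
  have h1 : M.sum x = M.sum fun k => y (e.symm k) := by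
    have := M.sum_flatten y e
    rw [← this]
    simp only [hy]
    rw [hinner x]
  let e' : ι × ι ≃ ι := (Equiv.prodCongr π (Equiv.refl ι)).trans e
  have h2 : (M.sum fun i => x (π i)) = M.sum fun k => y (e.symm k) := by
    have h := M.sum_flatten (fun p => y (π p.1, p.2)) e'
    simp only [hy] at h
    rw [hinner (fun i => x (π i))] at h
    rw [h]
    congr 1
    funext k
    simp [e', Equiv.prodCongr, hy]
  rw [h1, h2]
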